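/- ΔQ_CoreLog identity: assume m y > 0 for every y, n y' > 0 and n_y y' > 0 for all y, y', and let G_log p := ∑ y, p y * Real.log (p y). Then the acquisition value under the logarithmic score equals the expected Kullback–Leibler divergence between posterior and prior predictive: ∑ y, m y * (∑ y', n_y y' * Real.log (n_y y' / n y')) = (∑ y, m y * G_log (n_y)) - G_log n. -/

import Mathlib

/-- A probability vector on a finite type. -/
def IsProbVec {Y : Type*} [Fintype Y] (q : Y → ℝ) : Prop :=
  (∀ y, 0 ≤ q y) ∧ ∑ y, q y = 1

/-- Negative Shannon entropy, the generator of the logarithmic score. -/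
noncomputable def Glog {Y : Type*} [Fintype Y] (p : Y → ℝ) : ℝ :=
  ∑ y, p y * Real.log (p y)

/-- `ΔQ_CoreLog` identity: the acquisition value under the logarithmic score
equals the expected Kullback–Leibler divergence between posterior and prior
predictive. -/
theorem deltaQ_coreLog_identity {Y Θ : Type*} [Fintype Y] [Nonempty Y]
    [Fintype Θ] [Nonempty Θ]
    (w : Θ → ℝ) (hw : IsProbVec w)
    (p : Θ → Y → ℝ) (hp : ∀ θ, IsProbVec (p θ))
    (r : Θ → Y → ℝ) (hr : ∀ θ, IsProbVec (r θ))
    (m : Y → ℝ) (hm : ∀ y, m y = ∑ θ, w θ * p θ y)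
    (hmpos : ∀ y, m y > 0)
    (n : Y → ℝ) (hn : ∀ y', n y' = ∑ θ, w θ * r θ y')
    (hnpos : ∀ y', n y' > 0)
    (npost : Y → Y → ℝ)
    (hnpost : ∀ y y', npost y y' = ∑ θ, (w θ * p θ y / m y) * r θ y')
    (hnpostpos : ∀ y y', npost y y' > 0) :
    ∑ y, m y * (∑ y', npost y y' * Real.log (npost y y' / n y')) =
      (∑ y, m y * Glog (npost y)) - Glog n := by
  have key : ∀ y', ∑ y, m y * npost y y' = n y' := by
    intro y'
    have h1 : ∀ y, m y * npost y y' = ∑ θ, w θ * p θ y * r θ y' := by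
      intro y
      rw [hnpost, Finset.mul_sum]
      refine Finset.sum_congr rfl fun θ _ => ?_
      have hmne := (hmpos y).ne'
      field_simp
    calc ∑ y, m y * npost y y' = ∑ y, ∑ θ, w θ * p θ y * r θ y' := by
          exact Finset.sum_congr rfl fun y _ => h1 y
      _ = ∑ θ, ∑ y, w θ * p θ y * r θ y' := Finset.sum_comm
      _ = ∑ θ, w θ * r θ y' := by
          refine Finset.sum_congr rfl fun θ _ => ?_
          have : ∑ y, w θ * p θ y * r θ y' = (w θ * r θ y') * ∑ y, p θ y := by
            rw [Finset.mul_sum]; exact Finset.sum_congr rfl fun y _ => by ring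
          rw [this, (hp θ).2, mul_one]
      _ = n y' := (hn y').symm
  have expand : ∀ y, ∑ y', npost y y' * Real.log (npost y y' / n y') =
      Glog (npost y) - ∑ y', npost y y' * Real.log (n y') := by
    intro y
    rw [Glog, ← Finset.sum_sub_distrib]
    refine Finset.sum_congr rfl fun y' _ => ?_
    rw [Real.log_div (hnpostpos y y').ne' (hnpos y').ne']
    ring
  calc ∑ y, m y * (∑ y', npost y y' * Real.log (npost y y' / n y'))
      = ∑ y, (m y * Glog (npost y) - m y * ∑ y', npost y y' * Real.log (n y')) := by
        refine Finset.sum_congr rfl fun y _ => ?_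
        rw [expand y]; ring
    _ = (∑ y, m y * Glog (npost y)) - ∑ y, m y * ∑ y', npost y y' * Real.log (n y') :=
        Finset.sum_sub_distrib _ _
    _ = (∑ y, m y * Glog (npost y)) - Glog n := by
        congr 1
        calc ∑ y, m y * ∑ y', npost y y' * Real.log (n y')
            = ∑ y, ∑ y', m y * npost y y' * Real.log (n y') := by
              refine Finset.sum_congr rfl fun y _ => ?_
              rw [Finset.mul_sum]
              exact Finset.sum_congr rfl fun y' _ => by ring
          _ = ∑ y', (∑ y, m y * npost y y') * Real.log (n y') := by
              rw [Finset.sum_comm]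
              exact Finset.sum_congr rfl fun y' _ => (Finset.sum_mul _ _ _).symm
          _ = Glog n := by
              refine Finset.sum_congr rfl fun y' _ => ?_
              rw [key y']
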